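/- Assume (H1)–(H5) and let x₀ ∈ 𝕊 satisfy ∇h(x₀)·[f₁,f₂](x₀) < 0. Let r be a drop generator with primitive drop R of period τ₀ such that 𝐒(x₀)(R(t)) ≤ 0 for every t ∈ ℝ, and assume in addition that Area(R)|₀^s ≥ C s³ for all s ∈ [0, τ₀] for some C > 0. Then there exists τ̄ > 0 such that for every τ ∈ (0, τ̄), setting ω := τ₀/τ and letting y be the solution of ẏ(t) = r¹(ωt) f₁(y(t)) + r²(ωt) f₂(y(t)) with y(0) = x₀, one has h(y(t)) − h(x₀) ≤ (C/2) ∇h(x₀)·[f₁,f₂](x₀) · ω t³ ≤ −(C α τ₀ / 2) · t³/τ for all t ∈ [0, τ], where α is the constant of (H4). -/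

import Mathlib

open MeasureTheory Set

lemma lip_snd_deriv {E : Type*} [NormedAddCommGroup E] [NormedSpace ℝ E] {h : E → ℝ} {M : NNReal}
    (hM : LipschitzWith M (iteratedFDeriv ℝ 2 h)) (x x' : E) :
    ‖fderiv ℝ (fderiv ℝ h) x - fderiv ℝ (fderiv ℝ h) x'‖ ≤ M * ‖x - x'‖ := by
  refine ContinuousLinearMap.opNorm_le_bound _ (by positivity) fun v => ?_
  rw [mul_assoc]
  refine ContinuousLinearMap.opNorm_le_bound _ (by positivity) fun w => ?_
  have h1 : (fderiv ℝ (fderiv ℝ h) x - fderiv ℝ (fderiv ℝ h) x') v w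
      = (iteratedFDeriv ℝ 2 h x - iteratedFDeriv ℝ 2 h x') ![v, w] := by
    simp [iteratedFDeriv_two_apply]
  calc ‖(fderiv ℝ (fderiv ℝ h) x - fderiv ℝ (fderiv ℝ h) x') v w‖
      = ‖(iteratedFDeriv ℝ 2 h x - iteratedFDeriv ℝ 2 h x') ![v, w]‖ := by rw [h1]
    _ ≤ ‖iteratedFDeriv ℝ 2 h x - iteratedFDeriv ℝ 2 h x'‖ * ∏ i, ‖![v, w] i‖ :=
        ContinuousMultilinearMap.le_opNorm _ _
    _ ≤ (M * ‖x - x'‖) * (‖v‖ * ‖w‖) := by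
        have := hM.dist_le_mul x x'
        rw [dist_eq_norm, dist_eq_norm] at this
        gcongr
        simp [Fin.prod_univ_two]
    _ = (M : ℝ) * (‖x - x'‖ * ‖v‖) * ‖w‖ := by ring

lemma mvt_helper {E : Type*} [NormedAddCommGroup E] [NormedSpace ℝ E] {f f' : ℝ → E}
    {a b C : ℝ} (hab : a ≤ b) (hd : ∀ s ∈ Icc a b, HasDerivAt f (f' s) s)
    (hb : ∀ s ∈ Icc a b, ‖f' s‖ ≤ C) : ‖f b - f a‖ ≤ C * (b - a) := by
  have := Convex.norm_image_sub_le_of_norm_hasDerivWithin_le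
    (f := f) (f' := f') (C := C) (s := Icc a b)
    (fun x hx => (hd x hx).hasDerivWithinAt) hb (convex_Icc a b)
    (left_mem_Icc.2 hab) (right_mem_Icc.2 hab)
  calc ‖f b - f a‖ ≤ C * ‖b - a‖ := this
    _ = C * (b - a) := by rw [Real.norm_eq_abs, abs_of_nonneg (by linarith)]

set_option maxHeartbeats 2000000

lemma taylor_helper {E : Type*} [NormedAddCommGroup E] [NormedSpace ℝ E]
    {g : E → ℝ} {g' : E → E →L[ℝ] ℝ} {x₀ : E} {L ρ : ℝ} (hL0 : 0 ≤ L)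
    (hd : ∀ x ∈ Metric.closedBall x₀ ρ, HasFDerivAt g (g' x) x)
    (hLip : ∀ x ∈ Metric.closedBall x₀ ρ, ‖g' x - g' x₀‖ ≤ L * ‖x - x₀‖)
    (hg0 : g x₀ = 0) {x : E} (hx : x ∈ Metric.closedBall x₀ ρ) :
    ‖g x - g' x₀ (x - x₀)‖ ≤ L * ‖x - x₀‖ ^ 2 := by
  set d := ‖x - x₀‖ with hd_def
  have hdρ : d ≤ ρ := by
    have := Metric.mem_closedBall.1 hx
    rwa [dist_eq_norm] at this
  have hsub : Metric.closedBall x₀ d ⊆ Metric.closedBall x₀ ρ :=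
    Metric.closedBall_subset_closedBall hdρ
  have hF : ∀ y ∈ Metric.closedBall x₀ d,
      HasFDerivWithinAt (fun y => g y - g' x₀ (y - x₀)) (g' y - g' x₀) (Metric.closedBall x₀ d) y := by
    intro y hy
    have h1 : HasFDerivAt (fun y => g' x₀ (y - x₀)) (g' x₀) y := by
      simp only [map_sub]
      exact (g' x₀).hasFDerivAt.sub_const _
    exact ((hd y (hsub hy)).sub h1).hasFDerivWithinAt
  have hbd : ∀ y ∈ Metric.closedBall x₀ d, ‖g' y - g' x₀‖ ≤ L * d := by
    intro y hy
    refine (hLip y (hsub hy)).trans ?_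
    have : ‖y - x₀‖ ≤ d := by
      have := Metric.mem_closedBall.1 hy; rwa [dist_eq_norm] at this
    exact mul_le_mul_of_nonneg_left this hL0
  have hx' : x ∈ Metric.closedBall x₀ d := by
    rw [Metric.mem_closedBall, dist_eq_norm]
  have hx₀' : x₀ ∈ Metric.closedBall x₀ d := Metric.mem_closedBall_self (by positivity)
  have := Convex.norm_image_sub_le_of_norm_hasFDerivWithin_le hF hbd
    (convex_closedBall x₀ d) hx₀' hx'
  simpa [hg0, sq, mul_assoc] using this

variable {E : Type*} [NormedAddCommGroup E] [NormedSpace ℝ E]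

/-- derivative of `x ↦ fderiv h x (f x)` -/
noncomputable def Dpsi (h : E → ℝ) (f : E → E) (x : E) : E →L[ℝ] ℝ :=
  (fderiv ℝ h x).comp (fderiv ℝ f x) + (fderiv ℝ (fderiv ℝ h) x).flip (f x)

lemma psi_hasFDerivAt {h : E → ℝ} {f : E → E} (hh : ContDiff ℝ 2 h) (hf : ContDiff ℝ 2 f)
    (x : E) : HasFDerivAt (fun y => fderiv ℝ h y (f y)) (Dpsi h f x) x := by
  have h1 : HasFDerivAt (fderiv ℝ h) (fderiv ℝ (fderiv ℝ h) x) x :=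
    (((hh.fderiv_right (m := 1) (by norm_num)).differentiable one_ne_zero) x).hasFDerivAt
  have h2 : HasFDerivAt f (fderiv ℝ f x) x :=
    ((hf.differentiable two_ne_zero) x).hasFDerivAt
  exact h1.clm_apply h2

lemma const_clm_hasFDerivAt {h : E → ℝ} (hh : ContDiff ℝ 2 h) (c : E) (x : E) :
    HasFDerivAt (fun y => fderiv ℝ h y c) ((fderiv ℝ (fderiv ℝ h) x).flip c) x := by
  have h1 : HasFDerivAt (fderiv ℝ h) (fderiv ℝ (fderiv ℝ h) x) x :=
    (((hh.fderiv_right (m := 1) (by norm_num)).differentiable one_ne_zero) x).hasFDerivAt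
  have := h1.clm_apply (hasFDerivAt_const c x)
  simpa using this

lemma flip_norm_le {F G H : Type*} [NormedAddCommGroup F] [NormedSpace ℝ F]
    [NormedAddCommGroup G] [NormedSpace ℝ G] [NormedAddCommGroup H] [NormedSpace ℝ H]
    (B : F →L[ℝ] G →L[ℝ] H) (c : G) : ‖B.flip c‖ ≤ ‖B‖ * ‖c‖ := by
  refine ContinuousLinearMap.opNorm_le_bound _ (by positivity) fun v => ?_
  calc ‖B.flip c v‖ = ‖B v c‖ := rfl
    _ ≤ ‖B v‖ * ‖c‖ := (B v).le_opNorm c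
    _ ≤ (‖B‖ * ‖v‖) * ‖c‖ := by gcongr; exact B.le_opNorm v
    _ = ‖B‖ * ‖c‖ * ‖v‖ := by ring

lemma psi_deriv_lip [ProperSpace E] {h : E → ℝ} {f : E → E} {kf kh M : NNReal} {k₀ : ℝ}
    (hh : ContDiff ℝ 2 h) (hf : ContDiff ℝ 2 f)
    (hfl : LipschitzWith kf f) (hhl : LipschitzWith kh h)
    (hM : LipschitzWith M (iteratedFDeriv ℝ 2 h))
    (hb : ∀ x, ‖f x‖ ≤ k₀) (x₀ : E) :
    ∃ L ≥ 0, ∀ x ∈ Metric.closedBall x₀ 1, ‖Dpsi h f x - Dpsi h f x₀‖ ≤ L * ‖x - x₀‖ := by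
  set A := fun x => fderiv ℝ (fderiv ℝ h) x with hA
  have hnorm : ∀ y ∈ Metric.closedBall x₀ 1, ‖y - x₀‖ ≤ 1 := by
    intro y hy
    have := Metric.mem_closedBall.1 hy; rwa [dist_eq_norm] at this
  -- bound on ‖A y‖ on the ball
  have hAbd : ∀ y ∈ Metric.closedBall x₀ 1, ‖A y‖ ≤ ‖A x₀‖ + M := by
    intro y hy
    have h1 : ‖A y - A x₀‖ ≤ M * ‖y - x₀‖ := lip_snd_deriv hM y x₀
    have h2 := hnorm y hy
    have h3 := norm_sub_norm_le (A y) (A x₀)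
    nlinarith [M.coe_nonneg]
  -- Lipschitz bound for fderiv h on the ball
  have hDh : ∀ x ∈ Metric.closedBall x₀ 1,
      ‖fderiv ℝ h x - fderiv ℝ h x₀‖ ≤ (‖A x₀‖ + M) * ‖x - x₀‖ := by
    intro x hx
    refine Convex.norm_image_sub_le_of_norm_hasFDerivWithin_le (f := fderiv ℝ h) (f' := A)
      (fun y hy => ((((hh.fderiv_right (m := 1) (by norm_num)).differentiable one_ne_zero) y).hasFDerivAt).hasFDerivWithinAt)
      hAbd (convex_closedBall x₀ 1) (Metric.mem_closedBall_self (by norm_num)) hx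
  -- Lipschitz bound for fderiv f on the ball
  obtain ⟨Cf, hCf⟩ := (isCompact_closedBall x₀ 1).exists_bound_of_continuousOn
    (((hf.fderiv_right (m := 1) (by norm_num)).continuous_fderiv one_ne_zero).continuousOn
      (s := Metric.closedBall x₀ 1))
  set Cf' := max Cf 0 with hCf'
  have hDf : ∀ x ∈ Metric.closedBall x₀ 1,
      ‖fderiv ℝ f x - fderiv ℝ f x₀‖ ≤ Cf' * ‖x - x₀‖ := by
    intro x hx
    refine Convex.norm_image_sub_le_of_norm_hasFDerivWithin_le (f := fderiv ℝ f)
      (f' := fun y => fderiv ℝ (fderiv ℝ f) y)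
      (fun y hy => ((((hf.fderiv_right (m := 1) (by norm_num)).differentiable one_ne_zero) y).hasFDerivAt).hasFDerivWithinAt)
      (fun y hy => (hCf y hy).trans (le_max_left _ _))
      (convex_closedBall x₀ 1) (Metric.mem_closedBall_self (by norm_num)) hx
  set k₀' := max k₀ 0 with hk₀'
  have hbk : ∀ x, ‖f x‖ ≤ k₀' := fun x => (hb x).trans (le_max_left _ _)
  refine ⟨(‖A x₀‖ + M) * kf + kh * Cf' + M * k₀' + ‖A x₀‖ * kf, by positivity, ?_⟩
  intro x hx
  have key1 : (fderiv ℝ h x).comp (fderiv ℝ f x) - (fderiv ℝ h x₀).comp (fderiv ℝ f x₀)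
      = (fderiv ℝ h x - fderiv ℝ h x₀).comp (fderiv ℝ f x)
        + (fderiv ℝ h x₀).comp (fderiv ℝ f x - fderiv ℝ f x₀) := by
    ext v; simp
  have key2 : (A x).flip (f x) - (A x₀).flip (f x₀)
      = (A x - A x₀).flip (f x) + (A x₀).flip (f x - f x₀) := by
    ext v; simp
  have e1 : ‖(fderiv ℝ h x).comp (fderiv ℝ f x) - (fderiv ℝ h x₀).comp (fderiv ℝ f x₀)‖
      ≤ ((‖A x₀‖ + M) * kf + kh * Cf') * ‖x - x₀‖ := by
    rw [key1]
    refine (norm_add_le _ _).trans ?_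
    have b1 : ‖(fderiv ℝ h x - fderiv ℝ h x₀).comp (fderiv ℝ f x)‖
        ≤ ((‖A x₀‖ + M) * ‖x - x₀‖) * kf := by
      refine (ContinuousLinearMap.opNorm_comp_le _ _).trans ?_
      have := hDh x hx
      have hdf : ‖fderiv ℝ f x‖ ≤ (kf : ℝ) := norm_fderiv_le_of_lipschitz ℝ hfl
      exact mul_le_mul this hdf (norm_nonneg _) (by positivity)
    have b2 : ‖(fderiv ℝ h x₀).comp (fderiv ℝ f x - fderiv ℝ f x₀)‖
        ≤ (kh : ℝ) * (Cf' * ‖x - x₀‖) := by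
      refine (ContinuousLinearMap.opNorm_comp_le _ _).trans ?_
      exact mul_le_mul (norm_fderiv_le_of_lipschitz ℝ hhl) (hDf x hx) (norm_nonneg _) kh.coe_nonneg
    nlinarith [norm_nonneg (x - x₀)]
  have e2 : ‖(A x).flip (f x) - (A x₀).flip (f x₀)‖
      ≤ ((M : ℝ) * k₀' + ‖A x₀‖ * kf) * ‖x - x₀‖ := by
    rw [key2]
    refine (norm_add_le _ _).trans ?_
    have b1 : ‖(A x - A x₀).flip (f x)‖ ≤ ((M : ℝ) * ‖x - x₀‖) * k₀' := by
      refine (flip_norm_le _ _).trans ?_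
      exact mul_le_mul (lip_snd_deriv hM x x₀) (hbk x) (norm_nonneg _) (by positivity)
    have b2 : ‖(A x₀).flip (f x - f x₀)‖ ≤ ‖A x₀‖ * ((kf : ℝ) * ‖x - x₀‖) := by
      refine (flip_norm_le _ _).trans ?_
      have := hfl.dist_le_mul x x₀
      rw [dist_eq_norm, dist_eq_norm] at this
      exact mul_le_mul_of_nonneg_left this (by positivity)
    nlinarith [norm_nonneg (x - x₀)]
  calc ‖Dpsi h f x - Dpsi h f x₀‖
      ≤ ‖(fderiv ℝ h x).comp (fderiv ℝ f x) - (fderiv ℝ h x₀).comp (fderiv ℝ f x₀)‖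
        + ‖(A x).flip (f x) - (A x₀).flip (f x₀)‖ := by
        unfold Dpsi
        refine le_trans (le_of_eq ?_) (norm_add_le _ _)
        congr 1
        abel
    _ ≤ ((‖A x₀‖ + M) * kf + kh * Cf') * ‖x - x₀‖ + ((M : ℝ) * k₀' + ‖A x₀‖ * kf) * ‖x - x₀‖ :=
        add_le_add e1 e2
    _ = ((‖A x₀‖ + M) * kf + kh * Cf' + M * k₀' + ‖A x₀‖ * kf) * ‖x - x₀‖ := by ring

noncomputable section


/-- `n`-dimensional Euclidean space. -/
abbrev Euc (n : ℕ) : Type := EuclideanSpace ℝ (Fin n)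

/-- The Lie bracket `[f₁, f₂] := Df₂ f₁ − Df₁ f₂`. -/
def lieBracket {n : ℕ} (f₁ f₂ : Euc n → Euc n) (x : Euc n) : Euc n :=
  fderiv ℝ f₂ x (f₁ x) - fderiv ℝ f₁ x (f₂ x)

/-- Entries of the matrix `S(x)`:
`S_{ℓm}(x) = ½ ∇h(x)·(Df_ℓ(x) f_m(x) + Df_m(x) f_ℓ(x)) + f_ℓ(x)·D²h(x) f_m(x)`. -/
def Smat {n : ℕ} (f₁ f₂ : Euc n → Euc n) (h : Euc n → ℝ) (x : Euc n) (l m : Fin 2) : ℝ :=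
  (1 / 2) * fderiv ℝ h x (fderiv ℝ (![f₁, f₂] l) x (![f₁, f₂] m x)
      + fderiv ℝ (![f₁, f₂] m) x (![f₁, f₂] l x))
    + fderiv ℝ (fun y => fderiv ℝ h y (![f₁, f₂] m x)) x (![f₁, f₂] l x)

/-- The quadratic form `𝐒(x)` associated to the symmetric matrix `S(x)`. -/
def Sform {n : ℕ} (f₁ f₂ : Euc n → Euc n) (h : Euc n → ℝ) (x : Euc n) (w : Fin 2 → ℝ) : ℝ :=
  ∑ l : Fin 2, ∑ m : Fin 2, Smat f₁ f₂ h x l m * w l * w m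

/-- The singular set `𝕊 = {x ∈ C : ∇h·f₁ = ∇h·f₂ = 0}`. -/
def singSet {n : ℕ} (f₁ f₂ : Euc n → Euc n) (h : Euc n → ℝ) : Set (Euc n) :=
  {x | h x ≤ 0 ∧ fderiv ℝ h x (f₁ x) = 0 ∧ fderiv ℝ h x (f₂ x) = 0}

/-- Hypothesis (H1): `f₁, f₂` are `C²`, Lipschitz with a common constant, and
`‖f₁ x‖ + ‖f₂ x‖` is uniformly bounded. -/
def H1 {n : ℕ} (f₁ f₂ : Euc n → Euc n) : Prop :=
  ContDiff ℝ 2 f₁ ∧ ContDiff ℝ 2 f₂ ∧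
    (∃ kf : NNReal, LipschitzWith kf f₁ ∧ LipschitzWith kf f₂) ∧
    ∃ k₀ : ℝ, ∀ x, ‖f₁ x‖ + ‖f₂ x‖ ≤ k₀

/-- Hypothesis (H3): `h` is `C^{2,1}`, Lipschitz, `C = {h ≤ 0}` is nonempty and
`∇h ≠ 0` on `{h = 0}`. -/
def H3 {n : ℕ} (h : Euc n → ℝ) : Prop :=
  ContDiff ℝ 2 h ∧ (∃ M : NNReal, LipschitzWith M (iteratedFDeriv ℝ 2 h)) ∧
    (∃ kh : NNReal, LipschitzWith kh h) ∧ (∃ x, h x ≤ 0) ∧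
    ∀ x, h x = 0 → fderiv ℝ h x ≠ 0

/-- Hypothesis (H4): transversality of the Lie bracket on the singular set. -/
def H4 {n : ℕ} (f₁ f₂ : Euc n → Euc n) (h : Euc n → ℝ) : Prop :=
  ∃ α > 0, ∀ x ∈ singSet f₁ f₂ h, α < |fderiv ℝ h x (lieBracket f₁ f₂ x)|

/-- Hypothesis (H5): on the singular set, `𝐒(x)` is negative semidefinite or indefinite. -/
def H5 {n : ℕ} (f₁ f₂ : Euc n → Euc n) (h : Euc n → ℝ) : Prop :=
  ∀ x ∈ singSet f₁ f₂ h,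
    (∀ w : Fin 2 → ℝ, Sform f₁ f₂ h x w ≤ 0) ∨
      ((∃ w : Fin 2 → ℝ, Sform f₁ f₂ h x w < 0) ∧ (∃ w : Fin 2 → ℝ, 0 < Sform f₁ f₂ h x w))

/-- Hypothesis (H6): near the singular set,
`√((∇h·f₁)² + (∇h·f₂)²) ≥ d₀ · dist(x, 𝕊)`. -/
def H6 {n : ℕ} (f₁ f₂ : Euc n → Euc n) (h : Euc n → ℝ) : Prop :=
  ∃ δ > 0, ∃ d₀ > 0, ∀ x : Euc n, Metric.infDist x (singSet f₁ f₂ h) ≤ δ →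
    d₀ * Metric.infDist x (singSet f₁ f₂ h) ≤
      Real.sqrt ((fderiv ℝ h x (f₁ x)) ^ 2 + (fderiv ℝ h x (f₂ x)) ^ 2)

/-- The area swept by the planar curve `R = (R₁, R₂)` on `[a, b]`:
`Area(R)|_a^b = ½ ∫_a^b (R₂' R₁ − R₁' R₂)`. -/
def sweptArea (R₁ R₂ : ℝ → ℝ) (a b : ℝ) : ℝ :=
  (1 / 2) * ∫ s in a..b, (deriv R₂ s * R₁ s - deriv R₁ s * R₂ s)

/-- The excess swept by the planar curve `R = (R₁, R₂)` on `[0, t]`. -/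
def excess (R₁ R₂ : ℝ → ℝ) (t : ℝ) : ℝ :=
  ∑ l : Fin 2, ∑ m : Fin 2,
    ∫ s in (0:ℝ)..t,
      (∫ ξ in (0:ℝ)..s, |ξ * deriv (![R₁, R₂] l) ξ|) * |deriv (![R₁, R₂] m) s|

/-- `R = (R₁, R₂)` is a drop of period `τ₀`: a simple closed `τ₀`-periodic curve through `0`,
parameterized by arc length, with Lipschitz derivative, strictly increasing swept area on
`[0, τ₀]`, and excess controlled by the area. -/
structure IsDrop (R₁ R₂ : ℝ → ℝ) (τ₀ : ℝ) : Prop where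
  pos : 0 < τ₀
  diff₁ : Differentiable ℝ R₁
  diff₂ : Differentiable ℝ R₂
  init₁ : R₁ 0 = 0
  init₂ : R₂ 0 = 0
  unit : ∀ t, (deriv R₁ t) ^ 2 + (deriv R₂ t) ^ 2 = 1
  per₁ : Function.Periodic R₁ τ₀
  per₂ : Function.Periodic R₂ τ₀
  simple : Set.InjOn (fun t => (R₁ t, R₂ t)) (Set.Ico 0 τ₀)
  lip : ∃ L : NNReal, LipschitzWith L (deriv R₁) ∧ LipschitzWith L (deriv R₂)
  area_mono : StrictMonoOn (fun σ => sweptArea R₁ R₂ 0 σ) (Set.Icc 0 τ₀)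
  exc_le : ∃ C > 0, ∀ σ ∈ Set.Icc (0:ℝ) τ₀, excess R₁ R₂ σ ≤ C * |sweptArea R₁ R₂ 0 σ|

/-- **Corollary (cubic decrease of `h` along a spiraling trajectory).**
Assume (H1)–(H5) with the constant `α` of (H4) made explicit, let `x₀ ∈ 𝕊` with
`∇h(x₀)·[f₁,f₂](x₀) < 0`, and let `r = R'` be a drop generator of period `τ₀` with
`𝐒(x₀)(R(t)) ≤ 0` for all `t` and `Area(R)|₀^s ≥ C s³` on `[0, τ₀]`. Then there is
`τ̄ > 0` such that for all `τ ∈ (0, τ̄)`, with `ω = τ₀/τ`, the solution `y` of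
`ẏ = r¹(ωt) f₁(y) + r²(ωt) f₂(y)`, `y(0) = x₀`, satisfies
`h(y(t)) − h(x₀) ≤ (C/2) ∇h(x₀)·[f₁,f₂](x₀) ω t³ ≤ −(C α τ₀/2) t³/τ` on `[0, τ]`. -/
theorem spiral_cubic_decrease_at_singular_point {n : ℕ}
    (f₁ f₂ : Euc n → Euc n) (h : Euc n → ℝ)
    (h1 : H1 f₁ f₂) (h3 : H3 h)
    (α : ℝ) (hα : 0 < α)
    (h4 : ∀ x ∈ singSet f₁ f₂ h, α < |fderiv ℝ h x (lieBracket f₁ f₂ x)|)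
    (h5 : H5 f₁ f₂ h)
    (x₀ : Euc n) (hx₀ : x₀ ∈ singSet f₁ f₂ h)
    (hbr : fderiv ℝ h x₀ (lieBracket f₁ f₂ x₀) < 0)
    (R₁ R₂ : ℝ → ℝ) (τ₀ : ℝ) (hdrop : IsDrop R₁ R₂ τ₀)
    (hS : ∀ t : ℝ, Sform f₁ f₂ h x₀ ![R₁ t, R₂ t] ≤ 0)
    (C : ℝ) (hC : 0 < C)
    (harea : ∀ s ∈ Set.Icc (0:ℝ) τ₀, C * s ^ 3 ≤ sweptArea R₁ R₂ 0 s) :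
    ∃ τbar > 0, ∀ τ ∈ Set.Ioo (0:ℝ) τbar,
      ∀ y : ℝ → Euc n, y 0 = x₀ →
        (∀ t ∈ Set.Icc 0 τ,
          HasDerivAt y
            (deriv R₁ ((τ₀ / τ) * t) • f₁ (y t)
              + deriv R₂ ((τ₀ / τ) * t) • f₂ (y t)) t) →
        ∀ t ∈ Set.Icc 0 τ,
          h (y t) - h x₀ ≤
              (C / 2) * fderiv ℝ h x₀ (lieBracket f₁ f₂ x₀) * (τ₀ / τ) * t ^ 3 ∧
          (C / 2) * fderiv ℝ h x₀ (lieBracket f₁ f₂ x₀) * (τ₀ / τ) * t ^ 3 ≤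
              -(C * α * τ₀ / 2) * t ^ 3 / τ := by
  classical
  obtain ⟨hf₁, hf₂, ⟨kf, hkf₁, hkf₂⟩, ⟨k₀, hk₀⟩⟩ := h1
  obtain ⟨hh, ⟨M, hM⟩, ⟨kh, hkh⟩, -, -⟩ := h3
  obtain ⟨hx₀C, hpsi₁0, hpsi₂0⟩ := hx₀
  obtain ⟨B, hBdef⟩ : ∃ z : ℝ, z = fderiv ℝ h x₀ (lieBracket f₁ f₂ x₀) := ⟨_, rfl⟩
  have hBneg : B < 0 := by rw [hBdef]; exact hbr
  have hBα : B ≤ -α := by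
    rw [hBdef]
    have := h4 x₀ ⟨hx₀C, hpsi₁0, hpsi₂0⟩
    rw [abs_of_neg hbr] at this
    linarith
  have hk₀0 : 0 ≤ k₀ := le_trans (by positivity) (hk₀ x₀)
  have hb₁ : ∀ x, ‖f₁ x‖ ≤ k₀ := fun x => by
    have := hk₀ x; have := norm_nonneg (f₂ x); linarith
  have hb₂ : ∀ x, ‖f₂ x‖ ≤ k₀ := fun x => by
    have := hk₀ x; have := norm_nonneg (f₁ x); linarith
  obtain ⟨L₁, hL₁0, hL₁⟩ := psi_deriv_lip hh hf₁ hkf₁ hkh hM hb₁ x₀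
  obtain ⟨L₂, hL₂0, hL₂⟩ := psi_deriv_lip hh hf₂ hkf₂ hkh hM hb₂ x₀
  obtain ⟨L, hLdef⟩ : ∃ z : ℝ, z = max L₁ L₂ := ⟨_, rfl⟩
  have hL0 : 0 ≤ L := by rw [hLdef]; exact le_trans hL₁0 (le_max_left _ _)
  obtain ⟨G, hGdef⟩ : ∃ z : ℝ, z = max ‖Dpsi h f₁ x₀‖ ‖Dpsi h f₂ x₀‖ := ⟨_, rfl⟩
  have hG0 : 0 ≤ G := by rw [hGdef]; exact le_trans (norm_nonneg _) (le_max_left _ _)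
  obtain ⟨K₀, hK₀def⟩ : ∃ z : ℝ, z = 2 * (L * k₀ ^ 2 + 2 * G * kf * k₀) := ⟨_, rfl⟩
  have hK₀0 : 0 ≤ K₀ := by rw [hK₀def]; positivity
  obtain ⟨K, hKdef⟩ : ∃ z : ℝ, z = K₀ + 1 := ⟨_, rfl⟩
  have hK0 : 0 < K := by rw [hKdef]; linarith [hK₀0]
  -- Taylor estimates for ψ_i on the unit ball around x₀
  have hψ₁0 : fderiv ℝ h x₀ (f₁ x₀) = 0 := hpsi₁0
  have hψ₂0 : fderiv ℝ h x₀ (f₂ x₀) = 0 := hpsi₂0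
  have htay₁ : ∀ x ∈ Metric.closedBall x₀ 1,
      ‖fderiv ℝ h x (f₁ x) - Dpsi h f₁ x₀ (x - x₀)‖ ≤ L * ‖x - x₀‖ ^ 2 := by
    intro x hx
    exact taylor_helper hL0 (fun z _ => psi_hasFDerivAt hh hf₁ z)
      (fun z hz => (hL₁ z hz).trans
        (mul_le_mul_of_nonneg_right ((le_max_left L₁ L₂).trans_eq hLdef.symm) (norm_nonneg _))) hψ₁0 hx
  have htay₂ : ∀ x ∈ Metric.closedBall x₀ 1,
      ‖fderiv ℝ h x (f₂ x) - Dpsi h f₂ x₀ (x - x₀)‖ ≤ L * ‖x - x₀‖ ^ 2 := by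
    intro x hx
    exact taylor_helper hL0 (fun z _ => psi_hasFDerivAt hh hf₂ z)
      (fun z hz => (hL₂ z hz).trans
        (mul_le_mul_of_nonneg_right ((le_max_right L₁ L₂).trans_eq hLdef.symm) (norm_nonneg _))) hψ₂0 hx
  -- the entries a i j and the relation with Smat and the bracket
  obtain ⟨A, hAdef⟩ : ∃ z : Euc n → (Euc n →L[ℝ] (Euc n →L[ℝ] ℝ)), z = fun x => fderiv ℝ (fderiv ℝ h) x := ⟨_, rfl⟩
  have hsymm : ∀ v w, A x₀ v w = A x₀ w v := by
    intro v w
    rw [hAdef]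
    exact second_derivative_symmetric (f := h) (f' := fderiv ℝ h)
      (fun z => ((hh.differentiable two_ne_zero) z).hasFDerivAt)
      ((((hh.fderiv_right (m := 1) (by norm_num)).differentiable one_ne_zero) x₀).hasFDerivAt) v w
  obtain ⟨a11, ha11⟩ : ∃ z : ℝ, z = Dpsi h f₁ x₀ (f₁ x₀) := ⟨_, rfl⟩
  obtain ⟨a12, ha12⟩ : ∃ z : ℝ, z = Dpsi h f₁ x₀ (f₂ x₀) := ⟨_, rfl⟩
  obtain ⟨a21, ha21⟩ : ∃ z : ℝ, z = Dpsi h f₂ x₀ (f₁ x₀) := ⟨_, rfl⟩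
  obtain ⟨a22, ha22⟩ : ∃ z : ℝ, z = Dpsi h f₂ x₀ (f₂ x₀) := ⟨_, rfl⟩
  have hDpsi_apply : ∀ (f : Euc n → Euc n) (v : Euc n),
      Dpsi h f x₀ v = fderiv ℝ h x₀ (fderiv ℝ f x₀ v) + A x₀ v (f x₀) := by
    intro f v; rw [hAdef]; rfl
  have hflip : ∀ (c : Euc n) (v : Euc n),
      fderiv ℝ (fun y => fderiv ℝ h y c) x₀ v = A x₀ v c := by
    intro c v
    rw [hAdef, (const_clm_hasFDerivAt hh c x₀).fderiv]
    rfl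
  have hBsplit : B = fderiv ℝ h x₀ (fderiv ℝ f₂ x₀ (f₁ x₀))
      - fderiv ℝ h x₀ (fderiv ℝ f₁ x₀ (f₂ x₀)) := by
    rw [hBdef]; unfold lieBracket; rw [map_sub]
  have e11 : a11 = fderiv ℝ h x₀ (fderiv ℝ f₁ x₀ (f₁ x₀)) + A x₀ (f₁ x₀) (f₁ x₀) := by
    rw [ha11, hDpsi_apply]
  have e22 : a22 = fderiv ℝ h x₀ (fderiv ℝ f₂ x₀ (f₂ x₀)) + A x₀ (f₂ x₀) (f₂ x₀) := by
    rw [ha22, hDpsi_apply]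
  have e12 : a12 = fderiv ℝ h x₀ (fderiv ℝ f₁ x₀ (f₂ x₀)) + A x₀ (f₁ x₀) (f₂ x₀) := by
    rw [ha12, hDpsi_apply, hsymm (f₂ x₀) (f₁ x₀)]
  have e21 : a21 = fderiv ℝ h x₀ (fderiv ℝ f₂ x₀ (f₁ x₀)) + A x₀ (f₂ x₀) (f₁ x₀) := by
    rw [ha21, hDpsi_apply, hsymm (f₁ x₀) (f₂ x₀)]
  have hs00 : Smat f₁ f₂ h x₀ 0 0 = a11 := by
    unfold Smat
    simp only [Matrix.cons_val_zero]
    rw [hflip, e11, map_add]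
    ring
  have hs11 : Smat f₁ f₂ h x₀ 1 1 = a22 := by
    unfold Smat
    simp only [Matrix.cons_val_one, Matrix.head_cons, Matrix.cons_val_zero]
    rw [hflip, e22, map_add]
    ring
  have hs01 : Smat f₁ f₂ h x₀ 0 1 = a12 + B / 2 := by
    unfold Smat
    simp only [Matrix.cons_val_zero, Matrix.cons_val_one, Matrix.head_cons]
    rw [hflip, e12, map_add, hBsplit]
    ring
  have hs10 : Smat f₁ f₂ h x₀ 1 0 = a21 - B / 2 := by
    unfold Smat
    simp only [Matrix.cons_val_zero, Matrix.cons_val_one, Matrix.head_cons]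
    rw [hflip, e21, map_add, hBsplit]
    ring
  -- drop data
  obtain ⟨r₁, hr₁def⟩ : ∃ z : ℝ → ℝ, z = deriv R₁ := ⟨_, rfl⟩
  obtain ⟨r₂, hr₂def⟩ : ∃ z : ℝ → ℝ, z = deriv R₂ := ⟨_, rfl⟩
  have hR₁ : ∀ σ, HasDerivAt R₁ (r₁ σ) σ := fun σ => by rw [hr₁def]; exact (hdrop.diff₁ σ).hasDerivAt
  have hR₂ : ∀ σ, HasDerivAt R₂ (r₂ σ) σ := fun σ => by rw [hr₂def]; exact (hdrop.diff₂ σ).hasDerivAt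
  have hrb₁ : ∀ σ, |r₁ σ| ≤ 1 := by
    intro σ; rw [hr₁def, ← sq_le_one_iff_abs_le_one]; nlinarith only [hdrop.unit σ, sq_nonneg (deriv R₂ σ)]
  have hrb₂ : ∀ σ, |r₂ σ| ≤ 1 := by
    intro σ; rw [hr₂def, ← sq_le_one_iff_abs_le_one]; nlinarith only [hdrop.unit σ, sq_nonneg (deriv R₁ σ)]
  obtain ⟨Lr, hLr₁, hLr₂⟩ := hdrop.lip
  have hrc₁ : Continuous r₁ := hr₁def ▸ hLr₁.continuous
  have hrc₂ : Continuous r₂ := hr₂def ▸ hLr₂.continuous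
  have hRc₁ : Continuous R₁ := hdrop.diff₁.continuous
  have hRc₂ : Continuous R₂ := hdrop.diff₂.continuous
  -- area derivative
  obtain ⟨Ar, hArdef⟩ : ∃ z : ℝ → ℝ, z = fun σ => sweptArea R₁ R₂ 0 σ := ⟨_, rfl⟩
  have hArea : ∀ σ, HasDerivAt Ar ((1/2) * (r₂ σ * R₁ σ - r₁ σ * R₂ σ)) σ := by
    intro σ
    rw [hArdef, hr₁def, hr₂def]
    have hgc : Continuous (fun s => deriv R₂ s * R₁ s - deriv R₁ s * R₂ s) :=
      (hLr₂.continuous.mul hRc₁).sub (hLr₁.continuous.mul hRc₂)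
    have h1 := (hgc.integral_hasStrictDerivAt 0 σ).hasDerivAt
    exact h1.const_mul (1/2)
  have hAr0 : Ar 0 = 0 := by
    rw [hArdef]
    simp [sweptArea, intervalIntegral.integral_same]
  -- quadratic form along R
  obtain ⟨s00, hs00d⟩ : ∃ z : ℝ, z = Smat f₁ f₂ h x₀ 0 0 := ⟨_, rfl⟩
  obtain ⟨s01, hs01d⟩ : ∃ z : ℝ, z = Smat f₁ f₂ h x₀ 0 1 := ⟨_, rfl⟩
  obtain ⟨s10, hs10d⟩ : ∃ z : ℝ, z = Smat f₁ f₂ h x₀ 1 0 := ⟨_, rfl⟩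
  obtain ⟨s11, hs11d⟩ : ∃ z : ℝ, z = Smat f₁ f₂ h x₀ 1 1 := ⟨_, rfl⟩
  have hs00' : s00 = a11 := hs00d.trans hs00
  have hs01' : s01 = a12 + B / 2 := hs01d.trans hs01
  have hs10' : s10 = a21 - B / 2 := hs10d.trans hs10
  have hs11' : s11 = a22 := hs11d.trans hs11
  obtain ⟨Pe, hPedef⟩ : ∃ z : ℝ → ℝ, z = fun σ => s00 * (R₁ σ * R₁ σ) + s01 * (R₁ σ * R₂ σ)
      + s10 * (R₂ σ * R₁ σ) + s11 * (R₂ σ * R₂ σ) := ⟨_, rfl⟩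
  have hPeform : ∀ σ, Pe σ = Sform f₁ f₂ h x₀ ![R₁ σ, R₂ σ] := by
    intro σ
    rw [hPedef]
    simp only [Sform, Fin.sum_univ_two, Matrix.cons_val_zero, Matrix.cons_val_one,
      Matrix.head_cons, hs00d, hs01d, hs10d, hs11d]
    ring
  obtain ⟨pd, hpddef⟩ : ∃ z : ℝ → ℝ, z = fun σ => s00 * (r₁ σ * R₁ σ + R₁ σ * r₁ σ)
      + s01 * (r₁ σ * R₂ σ + R₁ σ * r₂ σ) + s10 * (r₂ σ * R₁ σ + R₂ σ * r₁ σ)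
      + s11 * (r₂ σ * R₂ σ + R₂ σ * r₂ σ) := ⟨_, rfl⟩
  have hPe : ∀ σ, HasDerivAt Pe (pd σ) σ := by
    intro σ
    rw [hPedef, hpddef]
    have h1 := ((((hR₁ σ).mul (hR₁ σ)).const_mul s00).add
      (((hR₁ σ).mul (hR₂ σ)).const_mul s01)).add
      ((((hR₂ σ).mul (hR₁ σ)).const_mul s10).add
      (((hR₂ σ).mul (hR₂ σ)).const_mul s11))
    exact (h1.congr_deriv (by dsimp only; ring)).congr_of_eventuallyEq
      (Filter.Eventually.of_forall fun σ' => by simp only [Pi.add_apply, Pi.mul_apply]; ring)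
  have hPe0 : Pe 0 = 0 := by
    rw [hPedef]
    simp [hdrop.init₁, hdrop.init₂]
  -- choose τbar
  have hτ₀pos := hdrop.pos
  have hk₁pos : (0:ℝ) < k₀ + 1 := by linarith
  have h2Kpos : (0:ℝ) < 2 * K := by linarith
  have hnB : 0 < -B := neg_pos.mpr hBneg
  refine ⟨min (1/(k₀+1)) ((C * (-B) * τ₀) / (2 * K)),
    lt_min (div_pos one_pos hk₁pos) (div_pos (mul_pos (mul_pos hC hnB) hτ₀pos) h2Kpos), ?_⟩
  rintro τ ⟨hτ0, hτlt⟩ y hy0 hy'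
  obtain ⟨ω, hωdef⟩ : ∃ z : ℝ, z = τ₀ / τ := ⟨_, rfl⟩
  have hωpos : 0 < ω := by rw [hωdef]; exact div_pos hτ₀pos hτ0
  have hωne : ω ≠ 0 := ne_of_gt hωpos
  have hτ1 : τ * (k₀ + 1) < 1 := by
    have h1 : τ < 1/(k₀+1) := lt_of_lt_of_le hτlt (min_le_left _ _)
    have h2 : 0 < k₀ + 1 := by linarith
    calc τ * (k₀+1) < (1/(k₀+1)) * (k₀+1) := mul_lt_mul_of_pos_right h1 h2
      _ = 1 := by field_simp
  have hτ2 : τ < (C * (-B) * τ₀) / (2 * K) := lt_of_lt_of_le hτlt (min_le_right _ _)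
  have hωK : K < (C/2) * (-B) * ω := by
    rw [lt_div_iff₀ h2Kpos] at hτ2
    have h3 : K * τ < (C/2) * (-B) * τ₀ := by linarith only [hτ2]
    calc K = (K * τ) / τ := by field_simp
      _ < ((C/2) * (-B) * τ₀) / τ := by gcongr
      _ = (C/2) * (-B) * ω := by rw [hωdef]; ring
  have hy'' : ∀ s ∈ Icc (0:ℝ) τ, HasDerivAt y
      (r₁ (ω*s) • f₁ (y s) + r₂ (ω*s) • f₂ (y s)) s := by
    intro s hs
    rw [hr₁def, hr₂def, hωdef]
    exact hy' s hs
  have hanti : a21 = a12 + B := by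
    rw [e12, e21, hBsplit, hsymm (f₂ x₀) (f₁ x₀)]; ring
  -- bound on trajectory displacement
  have hz : ∀ s ∈ Icc (0:ℝ) τ, ‖y s - x₀‖ ≤ k₀ * s := by
    intro s hs
    have h1 : ‖y s - y 0‖ ≤ k₀ * (s - 0) := by
      refine mvt_helper hs.1 (fun u hu => hy'' u ⟨hu.1, hu.2.trans hs.2⟩) ?_
      intro u hu
      calc ‖r₁ (ω*u) • f₁ (y u) + r₂ (ω*u) • f₂ (y u)‖
          ≤ ‖r₁ (ω*u) • f₁ (y u)‖ + ‖r₂ (ω*u) • f₂ (y u)‖ := norm_add_le _ _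
        _ ≤ ‖f₁ (y u)‖ + ‖f₂ (y u)‖ := by
            rw [norm_smul, norm_smul, Real.norm_eq_abs, Real.norm_eq_abs]
            linarith only [mul_le_mul_of_nonneg_right (hrb₁ (ω*u)) (norm_nonneg (f₁ (y u))),
              mul_le_mul_of_nonneg_right (hrb₂ (ω*u)) (norm_nonneg (f₂ (y u)))]
        _ ≤ k₀ := hk₀ (y u)
    rw [hy0] at h1
    simpa using h1
  have hball : ∀ s ∈ Icc (0:ℝ) τ, y s ∈ Metric.closedBall x₀ 1 := by
    intro s hs
    rw [Metric.mem_closedBall, dist_eq_norm]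
    have h1 := hz s hs
    have h2 := mul_le_mul_of_nonneg_left hs.2 hk₀0
    linarith only [h1, h2, hτ1, hτ0.le]
  -- the correction term w
  obtain ⟨w, hwdef⟩ : ∃ z : ℝ → Euc n, z = fun u => y u - x₀ - (ω⁻¹ * R₁ (ω*u)) • f₁ x₀
      - (ω⁻¹ * R₂ (ω*u)) • f₂ x₀ := ⟨_, rfl⟩
  have hw0 : w 0 = 0 := by
    rw [hwdef]
    simp [hy0, mul_zero, hdrop.init₁, hdrop.init₂]
  have hwderiv : ∀ u ∈ Icc (0:ℝ) τ, HasDerivAt w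
      (r₁ (ω*u) • (f₁ (y u) - f₁ x₀) + r₂ (ω*u) • (f₂ (y u) - f₂ x₀)) u := by
    intro u hu
    have hωid : HasDerivAt (fun v : ℝ => ω*v) ω u := by
      simpa using (hasDerivAt_id u).const_mul ω
    have hc₁ : HasDerivAt (fun v => ω⁻¹ * R₁ (ω*v)) (r₁ (ω*u)) u := by
      have hR : HasDerivAt (fun v => R₁ (ω*v)) (r₁ (ω*u) * ω) u := (hR₁ (ω*u)).comp u hωid
      have h2 := hR.const_mul ω⁻¹
      exact h2.congr_deriv (by field_simp)
    have hc₂ : HasDerivAt (fun v => ω⁻¹ * R₂ (ω*v)) (r₂ (ω*u)) u := by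
      have hR : HasDerivAt (fun v => R₂ (ω*v)) (r₂ (ω*u) * ω) u := (hR₂ (ω*u)).comp u hωid
      have h2 := hR.const_mul ω⁻¹
      exact h2.congr_deriv (by field_simp)
    have h3 := (((hy'' u hu).sub_const x₀).sub (hc₁.smul_const (f₁ x₀))).sub
      (hc₂.smul_const (f₂ x₀))
    rw [hwdef]
    exact h3.congr_deriv (by simp only [smul_sub]; abel)
  have hwb : ∀ s ∈ Icc (0:ℝ) τ, ‖w s‖ ≤ 2*kf*k₀*s^2 := by
    intro s hs
    have h1 : ‖w s - w 0‖ ≤ (2*kf*k₀*s) * (s - 0) := by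
      refine mvt_helper hs.1 (fun u hu => hwderiv u ⟨hu.1, hu.2.trans hs.2⟩) ?_
      intro u hu
      have hzu := hz u ⟨hu.1, hu.2.trans hs.2⟩
      have d₁ : ‖f₁ (y u) - f₁ x₀‖ ≤ kf * ‖y u - x₀‖ := by
        have := hkf₁.dist_le_mul (y u) x₀
        rw [dist_eq_norm, dist_eq_norm] at this; exact this
      have d₂ : ‖f₂ (y u) - f₂ x₀‖ ≤ kf * ‖y u - x₀‖ := by
        have := hkf₂.dist_le_mul (y u) x₀
        rw [dist_eq_norm, dist_eq_norm] at this; exact this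
      have b1 := hrb₁ (ω*u); have b2 := hrb₂ (ω*u)
      have c1 := abs_nonneg (r₁ (ω*u)); have c2 := abs_nonneg (r₂ (ω*u))
      have e1 := norm_nonneg (f₁ (y u) - f₁ x₀); have e2 := norm_nonneg (f₂ (y u) - f₂ x₀)
      have hu1 : u ≤ s := hu.2
      have hu0 : 0 ≤ u := hu.1
      have hkf0 : (0:ℝ) ≤ kf := kf.coe_nonneg
      calc ‖r₁ (ω*u) • (f₁ (y u) - f₁ x₀) + r₂ (ω*u) • (f₂ (y u) - f₂ x₀)‖
          ≤ ‖r₁ (ω*u) • (f₁ (y u) - f₁ x₀)‖ + ‖r₂ (ω*u) • (f₂ (y u) - f₂ x₀)‖ := norm_add_le _ _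
        _ ≤ ‖f₁ (y u) - f₁ x₀‖ + ‖f₂ (y u) - f₂ x₀‖ := by
            rw [norm_smul, norm_smul, Real.norm_eq_abs, Real.norm_eq_abs]
            linarith only [mul_le_mul_of_nonneg_right b1 e1, mul_le_mul_of_nonneg_right b2 e2]
        _ ≤ 2*kf*k₀*s := by
            linarith only [d₁, d₂, mul_le_mul_of_nonneg_left hzu hkf0,
              mul_le_mul_of_nonneg_left hu1 (mul_nonneg hkf0 hk₀0),
              mul_le_mul_of_nonneg_left (mul_le_mul_of_nonneg_left hu1 hk₀0) hkf0]
    rw [hw0] at h1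
    have h2 : (2*(kf:ℝ)*k₀*s) * (s - 0) = 2*kf*k₀*s^2 := by ring
    rw [h2] at h1
    simpa using h1
  -- Taylor bounds along the trajectory
  have hT₁ : ∀ s ∈ Icc (0:ℝ) τ,
      ‖fderiv ℝ h (y s) (f₁ (y s)) - Dpsi h f₁ x₀ (y s - x₀)‖ ≤ L * k₀^2 * s^2 := by
    intro s hs
    refine (htay₁ (y s) (hball s hs)).trans ?_
    have h1 := hz s hs
    have h2 := norm_nonneg (y s - x₀)
    nlinarith only [mul_le_mul h1 h1 h2 (mul_nonneg hk₀0 hs.1), hL0, h2, h1]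
  have hT₂ : ∀ s ∈ Icc (0:ℝ) τ,
      ‖fderiv ℝ h (y s) (f₂ (y s)) - Dpsi h f₂ x₀ (y s - x₀)‖ ≤ L * k₀^2 * s^2 := by
    intro s hs
    refine (htay₂ (y s) (hball s hs)).trans ?_
    have h1 := hz s hs
    have h2 := norm_nonneg (y s - x₀)
    nlinarith only [mul_le_mul h1 h1 h2 (mul_nonneg hk₀0 hs.1), hL0, h2, h1]
  -- the comparison function Q
  obtain ⟨Q, hQdef⟩ : ∃ z : ℝ → ℝ, z = fun s => (1/(2*ω^2)) * Pe (ω*s) + (B/ω^2) * Ar (ω*s) := ⟨_, rfl⟩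
  obtain ⟨qd, hqddef⟩ : ∃ z : ℝ → ℝ, z = fun s => (1/(2*ω^2)) * (pd (ω*s) * ω)
      + (B/ω^2) * (((1/2) * (r₂ (ω*s) * R₁ (ω*s) - r₁ (ω*s) * R₂ (ω*s))) * ω) := ⟨_, rfl⟩
  have hQderiv : ∀ s, HasDerivAt Q (qd s) s := by
    intro s
    have hωid : HasDerivAt (fun v : ℝ => ω*v) ω s := by
      simpa using (hasDerivAt_id s).const_mul ω
    have h1 := (((hPe (ω*s)).comp s hωid).const_mul (1/(2*ω^2)))
    have h2 := (((hArea (ω*s)).comp s hωid).const_mul (B/ω^2))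
    have h3 := h1.add h2
    rw [hQdef]
    exact h3.congr_deriv (by rw [hqddef])
  have hQ0 : Q 0 = 0 := by
    rw [hQdef]
    simp only [mul_zero, hPe0, hAr0]
    ring
  have hqd_eq : ∀ s, qd s = r₁ (ω*s) * (ω⁻¹ * R₁ (ω*s) * a11 + ω⁻¹ * R₂ (ω*s) * a12)
      + r₂ (ω*s) * (ω⁻¹ * R₁ (ω*s) * a21 + ω⁻¹ * R₂ (ω*s) * a22) := by
    intro s
    rw [hqddef, hpddef]
    simp only []
    rw [hs00', hs01', hs10', hs11', hanti]
    field_simp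
    ring
  -- decomposition of the derivative of h ∘ y
  have hdec₁ : ∀ s, Dpsi h f₁ x₀ (y s - x₀) = Dpsi h f₁ x₀ (w s)
      + (ω⁻¹ * R₁ (ω*s)) * a11 + (ω⁻¹ * R₂ (ω*s)) * a12 := by
    intro s
    have hws : y s - x₀ = w s + (ω⁻¹ * R₁ (ω*s)) • f₁ x₀ + (ω⁻¹ * R₂ (ω*s)) • f₂ x₀ := by
      rw [hwdef]; simp only; abel
    rw [hws, map_add, map_add, (Dpsi h f₁ x₀).map_smul, (Dpsi h f₁ x₀).map_smul,
      smul_eq_mul, smul_eq_mul, ← ha11, ← ha12]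
  have hdec₂ : ∀ s, Dpsi h f₂ x₀ (y s - x₀) = Dpsi h f₂ x₀ (w s)
      + (ω⁻¹ * R₁ (ω*s)) * a21 + (ω⁻¹ * R₂ (ω*s)) * a22 := by
    intro s
    have hws : y s - x₀ = w s + (ω⁻¹ * R₁ (ω*s)) • f₁ x₀ + (ω⁻¹ * R₂ (ω*s)) • f₂ x₀ := by
      rw [hwdef]; simp only; abel
    rw [hws, map_add, map_add, (Dpsi h f₂ x₀).map_smul, (Dpsi h f₂ x₀).map_smul,
      smul_eq_mul, smul_eq_mul, ← ha21, ← ha22]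
  have hΦderiv : ∀ s ∈ Icc (0:ℝ) τ, HasDerivAt (fun u => h (y u) - Q u)
      ((r₁ (ω*s) * fderiv ℝ h (y s) (f₁ (y s))
        + r₂ (ω*s) * fderiv ℝ h (y s) (f₂ (y s))) - qd s) s := by
    intro s hs
    have hhd : HasFDerivAt h (fderiv ℝ h (y s)) (y s) :=
      ((hh.differentiable two_ne_zero) (y s)).hasFDerivAt
    have h1 := hhd.comp_hasDerivAt s (hy'' s hs)
    have h2 : HasDerivAt (fun u => h (y u))
        (r₁ (ω*s) * fderiv ℝ h (y s) (f₁ (y s))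
          + r₂ (ω*s) * fderiv ℝ h (y s) (f₂ (y s))) s := by
      exact h1.congr_deriv (by
        rw [map_add, (fderiv ℝ h (y s)).map_smul, (fderiv ℝ h (y s)).map_smul]
        simp [smul_eq_mul])
    exact h2.sub (hQderiv s)
  have hΦbound : ∀ s ∈ Icc (0:ℝ) τ,
      ‖(r₁ (ω*s) * fderiv ℝ h (y s) (f₁ (y s))
        + r₂ (ω*s) * fderiv ℝ h (y s) (f₂ (y s))) - qd s‖ ≤ K₀ * s^2 := by
    intro s hs
    have hkey : (r₁ (ω*s) * fderiv ℝ h (y s) (f₁ (y s))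
        + r₂ (ω*s) * fderiv ℝ h (y s) (f₂ (y s))) - qd s
        = r₁ (ω*s) * ((fderiv ℝ h (y s) (f₁ (y s)) - Dpsi h f₁ x₀ (y s - x₀))
            + Dpsi h f₁ x₀ (w s))
          + r₂ (ω*s) * ((fderiv ℝ h (y s) (f₂ (y s)) - Dpsi h f₂ x₀ (y s - x₀))
            + Dpsi h f₂ x₀ (w s)) := by
      rw [hqd_eq s, hdec₁ s, hdec₂ s]; ring
    rw [hkey, Real.norm_eq_abs]
    have A1 : |fderiv ℝ h (y s) (f₁ (y s)) - Dpsi h f₁ x₀ (y s - x₀)| ≤ L * k₀^2 * s^2 := by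
      have := hT₁ s hs; rwa [Real.norm_eq_abs] at this
    have A2 : |fderiv ℝ h (y s) (f₂ (y s)) - Dpsi h f₂ x₀ (y s - x₀)| ≤ L * k₀^2 * s^2 := by
      have := hT₂ s hs; rwa [Real.norm_eq_abs] at this
    have W1 : |Dpsi h f₁ x₀ (w s)| ≤ G * (2*kf*k₀*s^2) := by
      have h1 := (Dpsi h f₁ x₀).le_opNorm (w s)
      rw [Real.norm_eq_abs] at h1
      refine h1.trans ?_
      have h2 := hwb s hs
      have h3 : ‖Dpsi h f₁ x₀‖ ≤ G := by rw [hGdef]; exact le_max_left _ _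
      nlinarith only [h2, h3, norm_nonneg (w s), norm_nonneg (Dpsi h f₁ x₀), hG0]
    have W2 : |Dpsi h f₂ x₀ (w s)| ≤ G * (2*kf*k₀*s^2) := by
      have h1 := (Dpsi h f₂ x₀).le_opNorm (w s)
      rw [Real.norm_eq_abs] at h1
      refine h1.trans ?_
      have h2 := hwb s hs
      have h3 : ‖Dpsi h f₂ x₀‖ ≤ G := by rw [hGdef]; exact le_max_right _ _
      nlinarith only [h2, h3, norm_nonneg (w s), norm_nonneg (Dpsi h f₂ x₀), hG0]
    have b1 := hrb₁ (ω*s); have b2 := hrb₂ (ω*s)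
    have c1 := abs_nonneg (r₁ (ω*s)); have c2 := abs_nonneg (r₂ (ω*s))
    calc |r₁ (ω*s) * ((fderiv ℝ h (y s) (f₁ (y s)) - Dpsi h f₁ x₀ (y s - x₀))
            + Dpsi h f₁ x₀ (w s))
          + r₂ (ω*s) * ((fderiv ℝ h (y s) (f₂ (y s)) - Dpsi h f₂ x₀ (y s - x₀))
            + Dpsi h f₂ x₀ (w s))|
        ≤ |r₁ (ω*s) * ((fderiv ℝ h (y s) (f₁ (y s)) - Dpsi h f₁ x₀ (y s - x₀))
            + Dpsi h f₁ x₀ (w s))|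
          + |r₂ (ω*s) * ((fderiv ℝ h (y s) (f₂ (y s)) - Dpsi h f₂ x₀ (y s - x₀))
            + Dpsi h f₂ x₀ (w s))| := abs_add_le _ _
      _ ≤ |(fderiv ℝ h (y s) (f₁ (y s)) - Dpsi h f₁ x₀ (y s - x₀)) + Dpsi h f₁ x₀ (w s)|
          + |(fderiv ℝ h (y s) (f₂ (y s)) - Dpsi h f₂ x₀ (y s - x₀)) + Dpsi h f₂ x₀ (w s)| := by
          rw [abs_mul, abs_mul]
          linarith only [mul_le_mul_of_nonneg_right b1
              (abs_nonneg ((fderiv ℝ h (y s) (f₁ (y s)) - Dpsi h f₁ x₀ (y s - x₀))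
                + Dpsi h f₁ x₀ (w s))),
            mul_le_mul_of_nonneg_right b2
              (abs_nonneg ((fderiv ℝ h (y s) (f₂ (y s)) - Dpsi h f₂ x₀ (y s - x₀))
                + Dpsi h f₂ x₀ (w s)))]
      _ ≤ (|fderiv ℝ h (y s) (f₁ (y s)) - Dpsi h f₁ x₀ (y s - x₀)| + |Dpsi h f₁ x₀ (w s)|)
          + (|fderiv ℝ h (y s) (f₂ (y s)) - Dpsi h f₂ x₀ (y s - x₀)| + |Dpsi h f₂ x₀ (w s)|) :=
          add_le_add (abs_add_le _ _) (abs_add_le _ _)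
      _ ≤ K₀ * s^2 := by rw [hK₀def]; linarith only [A1, A2, W1, W2]
  -- now fix t and conclude
  intro t ht
  obtain ⟨ht0, htτ⟩ := ht
  have hmv : ‖(h (y t) - Q t) - (h (y 0) - Q 0)‖ ≤ (K₀ * t^2) * (t - 0) := by
    refine mvt_helper ht0 (fun s hs => hΦderiv s ⟨hs.1, hs.2.trans htτ⟩) ?_
    intro s hs
    refine (hΦbound s ⟨hs.1, hs.2.trans htτ⟩).trans ?_
    have h1 : s^2 ≤ t^2 := pow_le_pow_left₀ hs.1 hs.2 2
    linarith only [mul_le_mul_of_nonneg_left h1 hK₀0]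
  rw [hy0, hQ0] at hmv
  have hmv' : h (y t) - h x₀ ≤ Q t + K₀ * t^3 := by
    rw [Real.norm_eq_abs] at hmv
    have h1 := (abs_le.1 hmv).2
    have h2 : (K₀ * t^2) * (t - 0) = K₀ * t^3 := by ring
    linarith only [h1, h2]
  have hωt_mem : ω * t ∈ Icc (0:ℝ) τ₀ := by
    constructor
    · exact mul_nonneg hωpos.le ht0
    · rw [hωdef]
      calc τ₀ / τ * t ≤ τ₀ / τ * τ :=
            mul_le_mul_of_nonneg_left htτ (div_nonneg hτ₀pos.le hτ0.le)
        _ = τ₀ := by field_simp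
  have hQt : Q t ≤ B * C * ω * t^3 := by
    have h1 : Pe (ω*t) ≤ 0 := by rw [hPeform]; exact hS (ω*t)
    have h2 : C * (ω*t)^3 ≤ Ar (ω*t) := by rw [hArdef]; exact harea (ω*t) hωt_mem
    have h3 : (B/ω^2) * Ar (ω*t) ≤ (B/ω^2) * (C * (ω*t)^3) := by
      apply mul_le_mul_of_nonpos_left h2
      exact le_of_lt (div_neg_of_neg_of_pos hBneg (pow_pos hωpos 2))
    have h4 : (B/ω^2) * (C * (ω*t)^3) = B * C * ω * t^3 := by
      field_simp
    have h5 : (1/(2*ω^2)) * Pe (ω*t) ≤ 0 :=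
      mul_nonpos_of_nonneg_of_nonpos (by positivity) h1
    have h6 : Q t = (1/(2*ω^2)) * Pe (ω*t) + (B/ω^2) * Ar (ω*t) := by rw [hQdef]
    rw [h6]; linarith
  rw [← hBdef, ← hωdef]
  constructor
  · -- main inequality
    have hKb : K₀ ≤ (C/2)*(-B)*ω - 1 := by
      rw [hKdef] at hωK; linarith
    have ht3 : (0:ℝ) ≤ t^3 := pow_nonneg ht0 3
    have h7 : B*C*ω*t^3 + K₀*t^3 ≤ (C/2)*B*ω*t^3 := by
      linarith only [mul_le_mul_of_nonneg_right hKb ht3, ht3]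
    calc h (y t) - h x₀ ≤ Q t + K₀ * t^3 := hmv'
      _ ≤ B*C*ω*t^3 + K₀*t^3 := by linarith
      _ ≤ (C/2)*B*ω*t^3 := h7
      _ = C / 2 * B * ω * t ^ 3 := by ring
  · -- second inequality
    have ht3 : (0:ℝ) ≤ t ^ 3 := pow_nonneg ht0 3
    have h1 : (C/2) * B * ω ≤ (C/2) * (-α) * ω := by
      have h2 : (0:ℝ) ≤ (C/2) * ω := mul_nonneg (by linarith) hωpos.le
      linarith only [mul_le_mul_of_nonneg_left hBα h2]
    have h2 : (C/2) * B * ω * t^3 ≤ (C/2) * (-α) * ω * t^3 :=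
      mul_le_mul_of_nonneg_right h1 ht3
    have h3 : (C/2) * (-α) * ω * t^3 = -(C * α * τ₀ / 2) * t^3 / τ := by
      rw [hωdef]; field_simp; try ring
    calc C / 2 * B * ω * t ^ 3 ≤ (C/2) * (-α) * ω * t^3 := by linarith
      _ = -(C * α * τ₀ / 2) * t ^ 3 / τ := h3

end
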